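/- For the k-dimensional Lyness map F(x_1,...,x_k) = (x_2,...,x_k,(a + x_2 + ... + x_k)/x_1) with a ≥ 0, the function V_1(x) = (a + Σ_{i=1}^k x_i)·(Π_{i=1}^k (x_i+1))/(x_1···x_k) is a first integral of F on the positive orthant, i.e., V_1(F(x)) = V_1(x) for all x with all coordinates positive. -/

import Mathlib

/-- `V₁` is a first integral of the `k`-dimensional Lyness map. -/
theorem lyness_V1_first_integral (k : ℕ) (hk : 2 ≤ k) (a : ℝ) (ha : 0 ≤ a)
    (F : (Fin k → ℝ) → (Fin k → ℝ))
    (hF : ∀ x : Fin k → ℝ, ∀ i : Fin k,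
      F x i = if h : (i : ℕ) + 1 < k then x ⟨(i : ℕ) + 1, h⟩
              else (a + (∑ j, x j) - x ⟨0, by omega⟩) / x ⟨0, by omega⟩)
    (V1 : (Fin k → ℝ) → ℝ)
    (hV1 : ∀ x : Fin k → ℝ, V1 x = (a + ∑ j, x j) * (∏ j, (x j + 1)) / ∏ j, x j)
    (x : Fin k → ℝ) (hx : ∀ i, 0 < x i) :
    V1 (F x) = V1 x := by
  obtain ⟨m, rfl⟩ : ∃ m, k = m + 1 := ⟨k - 1, by omega⟩
  have hm : 1 ≤ m := by omega
  haveI : Nonempty (Fin m) := ⟨⟨0, hm⟩⟩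
  have h0 : (⟨0, by omega⟩ : Fin (m + 1)) = 0 := rfl
  -- abbreviations
  set S : ℝ := ∑ i : Fin m, x i.succ with hSdef
  set P : ℝ := ∏ i : Fin m, x i.succ with hPdef
  set Q : ℝ := ∏ i : Fin m, (x i.succ + 1) with hQdef
  have hSum : ∑ j, x j = x 0 + S := Fin.sum_univ_succ x
  have hF1 : ∀ i : Fin m, F x i.castSucc = x i.succ := by
    intro i
    rw [hF]
    rw [dif_pos (by simpa using i.isLt)]
    congr 1
  have hF2 : F x (Fin.last m) = (a + S) / x 0 := by
    rw [hF, dif_neg (by simp)]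
    rw [h0, hSum]
    ring_nf
  have e1 : ∑ i, F x i = S + (a + S) / x 0 := by
    rw [Fin.sum_univ_castSucc]
    simp only [hF1, hF2, hSdef]
  have e2 : ∏ i, F x i = P * ((a + S) / x 0) := by
    rw [Fin.prod_univ_castSucc]
    simp only [hF1, hF2, hPdef]
  have e3 : ∏ i, (F x i + 1) = Q * ((a + S) / x 0 + 1) := by
    rw [Fin.prod_univ_castSucc]
    simp only [hF1, hF2, hQdef]
  have hx0 : (0:ℝ) < x 0 := hx 0
  have hP : (0:ℝ) < P := Finset.prod_pos fun i _ => hx _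
  have hs : (0:ℝ) < a + S := by
    have : 0 < S := Finset.sum_pos (fun i _ => hx _) Finset.univ_nonempty
    linarith
  rw [hV1, hV1, e1, e2, e3, hSum, Fin.prod_univ_succ x, Fin.prod_univ_succ (fun j => x j + 1)]
  simp only [← hPdef, ← hQdef]
  field_simp
  ring
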